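/- arXiv:1509.04669 — 3 statements merged into one kernel-verified Lean document; each statement's English description precedes it below -/
import Mathlib

section
/- Let (Y,d_Y) be a compact metric space of diameter at most 2 with a continuous action of a finitely generated group Γ, and let the warped cone metric d_Γ be the warped metric on the cone O Y = [1,∞) × Y with cone metric d((t,y),(t',y')) = |t−t'| + min(t,t')·d_Y(y,y') and the action γ(t,y) = (t,γy). For s ≥ 1 let d_s denote the warped metric on Y coming from the scaled metric s·d_Y. Then for all s ≥ 1, t ≥ 0, and y, y' ∈ Y: d_Γ((s,y),(s+t,y')) = t + d_s(y,y'). -/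
open scoped BigOperators

noncomputable def wordLength {G : Type*} [Group G] (S : Set G) (g : G) : ℕ :=
  sInf {n : ℕ | ∃ f : Fin n → G, (∀ i, f i ∈ S ∨ (f i)⁻¹ ∈ S) ∧ (List.ofFn f).prod = g}

def chainSums {G : Type*} [Group G] {X : Type*} (S : Set G) (act : G → X → X)
    (d : X → X → ℝ) (x x' : X) : Set ℝ :=
  {c | ∃ (N : ℕ) (xs : Fin (N + 1) → X) (γs : Fin N → G),
    xs 0 = x ∧ xs (Fin.last N) = x' ∧
    c = ∑ i : Fin N, ((wordLength S (γs i) : ℝ) + d (act (γs i) (xs i.castSucc)) (xs i.succ))}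

/-- The warped (pseudo)distance obtained from the chain formula. -/
noncomputable def warpDist {G : Type*} [Group G] {X : Type*} (S : Set G) (act : G → X → X)
    (d : X → X → ℝ) (x x' : X) : ℝ :=
  sInf (chainSums S act d x x')

/-- The cone over `Y`: `[1,∞) × Y` with `d((t,y),(t',y')) = |t-t'| + min(t,t')·d_Y(y,y')`. -/
def coneDist {Y : Type*} [MetricSpace Y] (p q : {t : ℝ // 1 ≤ t} × Y) : ℝ :=
  |p.1.1 - q.1.1| + min p.1.1 q.1.1 * dist p.2 q.2

def coneAct {G Y : Type*} (act : G → Y → Y) (g : G) (p : {t : ℝ // 1 ≤ t} × Y) :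
    {t : ℝ // 1 ≤ t} × Y :=
  (p.1, act g p.2)

section Aux

variable {G : Type*} [Group G] {X : Type*} (S : Set G) (act : G → X → X)

lemma wordLength_one : wordLength S (1 : G) = 0 := by
  apply Nat.sInf_eq_zero.mpr
  left
  exact ⟨fun i => i.elim0, fun i => i.elim0, by simp⟩

lemma chainSums_nonneg {d : X → X → ℝ} (hd : ∀ a b, 0 ≤ d a b) {x x' : X} {C : ℝ}
    (hC : C ∈ chainSums S act d x x') : 0 ≤ C := by
  obtain ⟨N, xs, γs, -, -, rfl⟩ := hC
  exact Finset.sum_nonneg fun i _ => add_nonneg (Nat.cast_nonneg _) (hd _ _)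

lemma chainSums_bddBelow {d : X → X → ℝ} (hd : ∀ a b, 0 ≤ d a b) (x x' : X) :
    BddBelow (chainSums S act d x x') :=
  ⟨0, fun _ hC => chainSums_nonneg S act hd hC⟩

lemma self_mem_chainSums (hact1 : ∀ x, act 1 x = x) (d : X → X → ℝ) (x x' : X) :
    d x x' ∈ chainSums S act d x x' := by
  refine ⟨1, ![x, x'], ![1], rfl, rfl, ?_⟩
  simp [Fin.sum_univ_one, wordLength_one, hact1]

lemma warpDist_nonneg {d : X → X → ℝ} (hd : ∀ a b, 0 ≤ d a b) (x x' : X) :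
    0 ≤ warpDist S act d x x' :=
  Real.sInf_nonneg fun _ hC => chainSums_nonneg S act hd hC

lemma warpDist_le (hact1 : ∀ x, act 1 x = x) {d : X → X → ℝ} (hd : ∀ a b, 0 ≤ d a b)
    (x x' : X) : warpDist S act d x x' ≤ d x x' :=
  csInf_le (chainSums_bddBelow S act hd x x') (self_mem_chainSums S act hact1 d x x')

lemma chainSums_snoc {d : X → X → ℝ} {x x' : X} {C : ℝ}
    (hC : C ∈ chainSums S act d x x') (γ : G) (x'' : X) :
    C + ((wordLength S γ : ℝ) + d (act γ x') x'') ∈ chainSums S act d x x'' := by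
  obtain ⟨N, xs, γs, h0, hl, rfl⟩ := hC
  refine ⟨N + 1, Fin.snoc xs x'', Fin.snoc γs γ, ?_, ?_, ?_⟩
  · rw [show (0 : Fin (N + 2)) = Fin.castSucc 0 from rfl, Fin.snoc_castSucc]; exact h0
  · simp
  · rw [Fin.sum_univ_castSucc]
    congr 1
    · apply Finset.sum_congr rfl
      intro j _
      simp [Fin.snoc_castSucc, -Fin.castSucc_succ, Fin.succ_castSucc]
    · rw [Fin.succ_last]
      simp [hl]


lemma warpDist_snoc_le (hact1 : ∀ x, act 1 x = x) {d : X → X → ℝ} (hd : ∀ a b, 0 ≤ d a b)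
    (x x' x'' : X) (γ : G) :
    warpDist S act d x x''
      ≤ warpDist S act d x x' + ((wordLength S γ : ℝ) + d (act γ x') x'') := by
  have hne : (chainSums S act d x x').Nonempty := ⟨_, self_mem_chainSums S act hact1 d x x'⟩
  have h : ∀ C ∈ chainSums S act d x x',
      warpDist S act d x x'' - ((wordLength S γ : ℝ) + d (act γ x') x'') ≤ C := by
    intro C hC
    have h1 : warpDist S act d x x'' ≤ C + ((wordLength S γ : ℝ) + d (act γ x') x'') :=
      csInf_le (chainSums_bddBelow S act hd x x'') (chainSums_snoc S act hC γ x'')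
    linarith
  have h2 : warpDist S act d x x'' - ((wordLength S γ : ℝ) + d (act γ x') x'')
      ≤ warpDist S act d x x' := le_csInf hne h
  linarith

lemma warpDist_mono (hact1 : ∀ x, act 1 x = x) {d d' : X → X → ℝ} (hd : ∀ a b, 0 ≤ d a b)
    (hdd' : ∀ a b, d a b ≤ d' a b) (x x' : X) :
    warpDist S act d x x' ≤ warpDist S act d' x x' := by
  apply le_csInf ⟨_, self_mem_chainSums S act hact1 d' x x'⟩
  intro C hC
  obtain ⟨N, xs, γs, h0, hl, rfl⟩ := hC
  calc warpDist S act d x x'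
      ≤ ∑ i : Fin N, ((wordLength S (γs i) : ℝ) + d (act (γs i) (xs i.castSucc)) (xs i.succ)) :=
        csInf_le (chainSums_bddBelow S act hd x x') ⟨N, xs, γs, h0, hl, rfl⟩
    _ ≤ ∑ i : Fin N, ((wordLength S (γs i) : ℝ) + d' (act (γs i) (xs i.castSucc)) (xs i.succ)) :=
        Finset.sum_le_sum fun i _ => by have := hdd' (act (γs i) (xs i.castSucc)) (xs i.succ); linarith

end Aux

section Scale

variable {G : Type*} [Group G] {Y : Type*} [MetricSpace Y]

lemma warpDist_scale_le (hdiam : ∀ y y' : Y, dist y y' ≤ 2)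
    (S : Set G) (act : G → Y → Y) (hact1 : ∀ y, act 1 y = y)
    {c m : ℝ} (hc : 0 ≤ c) (hcm : c ≤ m) (u v : Y) :
    warpDist S act (fun a b => m * dist a b) u v
      ≤ warpDist S act (fun a b => c * dist a b) u v + 2 * (m - c) := by
  have hm : (0:ℝ) ≤ m := hc.trans hcm
  have hd0c : ∀ a b : Y, 0 ≤ c * dist a b := fun a b => mul_nonneg hc dist_nonneg
  have hd0m : ∀ a b : Y, 0 ≤ m * dist a b := fun a b => mul_nonneg hm dist_nonneg
  have key : ∀ C ∈ chainSums S act (fun a b => c * dist a b) u v,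
      warpDist S act (fun a b => m * dist a b) u v ≤ C + 2 * (m - c) := by
    intro C hC
    obtain ⟨N, xs, γs, h0, hl, rfl⟩ := hC
    set D := ∑ i : Fin N, dist (act (γs i) (xs i.castSucc)) (xs i.succ) with hD
    have hD0 : 0 ≤ D := Finset.sum_nonneg fun i _ => dist_nonneg
    have h1 : warpDist S act (fun a b => m * dist a b) u v
        ≤ ∑ i : Fin N, ((wordLength S (γs i) : ℝ)
            + m * dist (act (γs i) (xs i.castSucc)) (xs i.succ)) :=
      csInf_le (chainSums_bddBelow S act hd0m u v) ⟨N, xs, γs, h0, hl, rfl⟩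
    have hsplit : ∑ i : Fin N, ((wordLength S (γs i) : ℝ)
            + m * dist (act (γs i) (xs i.castSucc)) (xs i.succ))
        = (∑ i : Fin N, ((wordLength S (γs i) : ℝ)
            + c * dist (act (γs i) (xs i.castSucc)) (xs i.succ))) + (m - c) * D := by
      rw [hD, Finset.mul_sum, ← Finset.sum_add_distrib]
      apply Finset.sum_congr rfl
      intros; ring
    have hcD : c * D ≤ ∑ i : Fin N, ((wordLength S (γs i) : ℝ)
            + c * dist (act (γs i) (xs i.castSucc)) (xs i.succ)) := by
      rw [hD, Finset.mul_sum]
      apply Finset.sum_le_sum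
      intro i _
      have : (0:ℝ) ≤ (wordLength S (γs i) : ℝ) := Nat.cast_nonneg _
      linarith
    rcases le_total D 2 with h2 | h2
    · nlinarith
    · have h3 : warpDist S act (fun a b => m * dist a b) u v ≤ m * dist u v :=
        warpDist_le S act hact1 hd0m u v
      have h4 : dist u v ≤ 2 := hdiam u v
      nlinarith
  have hne : (chainSums S act (fun a b => c * dist a b) u v).Nonempty :=
    ⟨_, self_mem_chainSums S act hact1 _ u v⟩
  have h5 : warpDist S act (fun a b => m * dist a b) u v - 2 * (m - c)
      ≤ warpDist S act (fun a b => c * dist a b) u v :=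
    le_csInf hne fun C hC => by linarith [key C hC]
  linarith

end Scale

section Cone

variable {G : Type*} [Group G] {Y : Type*} [MetricSpace Y]

lemma coneDist_nonneg (p q : {t : ℝ // 1 ≤ t} × Y) : 0 ≤ coneDist p q := by
  have h1 : (0:ℝ) ≤ min p.1.1 q.1.1 := le_trans zero_le_one (le_min p.1.2 q.1.2)
  exact add_nonneg (abs_nonneg _) (mul_nonneg h1 dist_nonneg)

lemma coneAct_one (act : G → Y → Y) (hact1 : ∀ y, act 1 y = y)
    (p : {t : ℝ // 1 ≤ t} × Y) : coneAct act (1 : G) p = p := by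
  cases p; simp [coneAct, hact1]

lemma chainSums_cone_level (S : Set G) (act : G → Y → Y) {s : ℝ} (hs : 1 ≤ s)
    {y y' : Y} {C : ℝ} (hC : C ∈ chainSums S act (fun a b => s * dist a b) y y') :
    C ∈ chainSums S (coneAct act) coneDist (⟨⟨s, hs⟩, y⟩) (⟨⟨s, hs⟩, y'⟩) := by
  obtain ⟨N, xs, γs, h0, hl, rfl⟩ := hC
  refine ⟨N, fun i => ⟨⟨s, hs⟩, xs i⟩, γs, by simp [h0], by simp [hl], ?_⟩
  apply Finset.sum_congr rfl
  intro i _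
  simp [coneDist, coneAct]

lemma cone_step (hdiam : ∀ y y' : Y, dist y y' ≤ 2) (S : Set G) (act : G → Y → Y)
    (hact1 : ∀ y, act 1 y = y) (p q r : {t : ℝ // 1 ≤ t} × Y) (γ : G) :
    |p.1.1 - r.1.1| + warpDist S act (fun a b => min p.1.1 r.1.1 * dist a b) p.2 r.2
      ≤ (|p.1.1 - q.1.1| + warpDist S act (fun a b => min p.1.1 q.1.1 * dist a b) p.2 q.2)
        + ((wordLength S γ : ℝ) + coneDist (coneAct act γ q) r) := by
  obtain ⟨⟨a, ha⟩, u⟩ := p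
  obtain ⟨⟨c, hc⟩, w⟩ := q
  obtain ⟨⟨b, hb⟩, v⟩ := r
  simp only [coneDist, coneAct]
  set m := min a b with hm
  have hma : m ≤ a := min_le_left _ _
  have hmb : m ≤ b := min_le_right _ _
  have hm1 : (1:ℝ) ≤ m := le_min ha hb
  have habs : |a - b| ≤ |a - c| + |c - b| := abs_sub_le a c b
  rcases le_or_gt m c with hmc | hcm
  · -- c ≥ m
    have hmac : m ≤ min a c := le_min hma hmc
    have hmcb : m ≤ min c b := le_min hmc hmb
    have hdm : ∀ x1 x2 : Y, 0 ≤ m * dist x1 x2 :=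
      fun x1 x2 => mul_nonneg (by linarith) dist_nonneg
    have h1 : warpDist S act (fun x1 x2 => m * dist x1 x2) u v
        ≤ warpDist S act (fun x1 x2 => m * dist x1 x2) u w
          + ((wordLength S γ : ℝ) + m * dist (act γ w) v) :=
      warpDist_snoc_le S act hact1 hdm u w v γ
    have h2 : warpDist S act (fun x1 x2 => m * dist x1 x2) u w
        ≤ warpDist S act (fun x1 x2 => min a c * dist x1 x2) u w :=
      warpDist_mono S act hact1 hdm
        (fun x1 x2 => mul_le_mul_of_nonneg_right hmac dist_nonneg) u w
    have h3 : m * dist (act γ w) v ≤ min c b * dist (act γ w) v :=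
      mul_le_mul_of_nonneg_right hmcb dist_nonneg
    linarith
  · -- c < m
    have hca : c ≤ a := le_trans hcm.le hma
    have hcb : c ≤ b := le_trans hcm.le hmb
    have hac : min a c = c := min_eq_right hca
    have hcb' : min c b = c := min_eq_left hcb
    rw [hac, hcb']
    have hdc : ∀ x1 x2 : Y, 0 ≤ c * dist x1 x2 :=
      fun x1 x2 => mul_nonneg (by linarith) dist_nonneg
    have h1 : warpDist S act (fun x1 x2 => m * dist x1 x2) u v
        ≤ warpDist S act (fun x1 x2 => c * dist x1 x2) u v + 2 * (m - c) :=
      warpDist_scale_le hdiam S act hact1 (by linarith) hcm.le u v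
    have h2 : warpDist S act (fun x1 x2 => c * dist x1 x2) u v
        ≤ warpDist S act (fun x1 x2 => c * dist x1 x2) u w
          + ((wordLength S γ : ℝ) + c * dist (act γ w) v) :=
      warpDist_snoc_le S act hact1 hdc u w v γ
    have habs2 : |a - c| + |c - b| = |a - b| + 2 * (m - c) := by
      rw [abs_of_nonneg (by linarith : (0:ℝ) ≤ a - c),
          abs_of_nonpos (by linarith : c - b ≤ (0:ℝ))]
      rcases le_total a b with h | h
      · rw [abs_of_nonpos (by linarith : a - b ≤ (0:ℝ))]
        have : m = a := min_eq_left h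
        rw [this]; ring
      · rw [abs_of_nonneg (by linarith : (0:ℝ) ≤ a - b)]
        have : m = b := min_eq_right h
        rw [this]; ring
    linarith

end Cone

section Main

variable {G : Type*} [Group G] {Y : Type*} [MetricSpace Y]

lemma cone_chain_lower (hdiam : ∀ y y' : Y, dist y y' ≤ 2) (S : Set G) (act : G → Y → Y)
    (hact1 : ∀ y, act 1 y = y) :
    ∀ (N : ℕ) (xs : Fin (N + 1) → {t : ℝ // 1 ≤ t} × Y) (γs : Fin N → G),
      |(xs 0).1.1 - (xs (Fin.last N)).1.1|
        + warpDist S act (fun a b => min (xs 0).1.1 (xs (Fin.last N)).1.1 * dist a b)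
            (xs 0).2 (xs (Fin.last N)).2
      ≤ ∑ i : Fin N,
          ((wordLength S (γs i) : ℝ) + coneDist (coneAct act (γs i) (xs i.castSucc)) (xs i.succ)) := by
  intro N
  induction N with
  | zero =>
    intro xs γs
    have h0 : (Fin.last 0) = (0 : Fin 1) := rfl
    rw [h0, Finset.univ_eq_empty, Finset.sum_empty]
    have hd : ∀ a b : Y, 0 ≤ min (xs 0).1.1 (xs 0).1.1 * dist a b := fun a b =>
      mul_nonneg (le_trans zero_le_one (le_min (xs 0).1.2 (xs 0).1.2)) dist_nonneg
    have h1 : warpDist S act (fun a b => min (xs 0).1.1 (xs 0).1.1 * dist a b)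
        (xs 0).2 (xs 0).2 ≤ min (xs 0).1.1 (xs 0).1.1 * dist (xs 0).2 (xs 0).2 :=
      warpDist_le S act hact1 hd _ _
    simp only [dist_self, mul_zero] at h1
    have h2 : (0:ℝ) ≤ warpDist S act (fun a b => min (xs 0).1.1 (xs 0).1.1 * dist a b)
        (xs 0).2 (xs 0).2 := warpDist_nonneg S act hd _ _
    simp only [sub_self, abs_zero]
    linarith
  | succ N ih =>
    intro xs γs
    rw [Fin.sum_univ_castSucc]
    simp only [Fin.succ_castSucc, Fin.succ_last, Nat.succ_eq_add_one]
    have h1 := ih (fun i => xs i.castSucc) (fun i => γs i.castSucc)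
    simp only [Fin.castSucc_zero] at h1
    have h2 := cone_step hdiam S act hact1 (xs 0) (xs (Fin.last N).castSucc)
      (xs (Fin.last (N + 1))) (γs (Fin.last N))
    linarith
end Main


/-- `d_Γ((s,y),(s+t,y')) = t + d_s(y,y')`. -/
theorem warped_cone_metric_formula {Y : Type*} [MetricSpace Y] [CompactSpace Y]
    (hdiam : ∀ y y' : Y, dist y y' ≤ 2)
    {G : Type*} [Group G] (S : Set G) (hSfin : S.Finite) (hSgen : Subgroup.closure S = ⊤)
    (act : G → Y → Y)
    (hact1 : ∀ y, act 1 y = y) (hactmul : ∀ g h y, act (g * h) y = act g (act h y))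
    (hcont : ∀ g, Continuous (act g)) :
    ∀ (s t : ℝ) (hs : 1 ≤ s) (ht : 0 ≤ t) (y y' : Y),
      warpDist S (coneAct act) coneDist (⟨⟨s, hs⟩, y⟩) (⟨⟨s + t, by linarith⟩, y'⟩)
        = t + warpDist S act (fun a b => s * dist a b) y y' := by
  intro s t hs ht y y'
  have hst : (1:ℝ) ≤ s + t := by linarith
  have hds : ∀ a b : Y, 0 ≤ s * dist a b := fun a b => mul_nonneg (by linarith) dist_nonneg
  have hcone1 : ∀ p : {u : ℝ // 1 ≤ u} × Y, coneAct act (1:G) p = p := coneAct_one act hact1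
  have hconeD : ∀ p q : {u : ℝ // 1 ≤ u} × Y, 0 ≤ coneDist p q := coneDist_nonneg
  have habs : |s - (s + t)| = t := by
    rw [show s - (s + t) = -t by ring, abs_neg, abs_of_nonneg ht]
  apply le_antisymm
  · -- ≤ direction
    have key : ∀ C ∈ chainSums S act (fun a b => s * dist a b) y y',
        warpDist S (coneAct act) coneDist (⟨⟨s, hs⟩, y⟩) (⟨⟨s + t, hst⟩, y'⟩) ≤ t + C := by
      intro C hC
      have h1 := chainSums_cone_level S act hs hC
      have h2 := chainSums_snoc S (coneAct act) h1 (1 : G) (⟨⟨s + t, hst⟩, y'⟩)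
      have h3 : C + ((wordLength S (1:G) : ℝ)
          + coneDist (coneAct act (1:G) (⟨⟨s, hs⟩, y'⟩)) (⟨⟨s + t, hst⟩, y'⟩)) = t + C := by
        rw [hcone1]
        simp only [coneDist, wordLength_one, Nat.cast_zero, dist_self, mul_zero, add_zero,
          zero_add, habs]
        ring
      rw [h3] at h2
      exact csInf_le (chainSums_bddBelow S (coneAct act) hconeD _ _) h2
    have hne : (chainSums S act (fun a b => s * dist a b) y y').Nonempty :=
      ⟨_, self_mem_chainSums S act hact1 _ y y'⟩
    have h4 : warpDist S (coneAct act) coneDist (⟨⟨s, hs⟩, y⟩) (⟨⟨s + t, hst⟩, y'⟩) - t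
        ≤ warpDist S act (fun a b => s * dist a b) y y' :=
      le_csInf hne fun C hC => by linarith [key C hC]
    linarith
  · -- ≥ direction
    apply le_csInf ⟨_, self_mem_chainSums S (coneAct act) hcone1 coneDist _ _⟩
    intro C hC
    obtain ⟨N, xs, γs, h0, hl, rfl⟩ := hC
    have h1 := cone_chain_lower hdiam S act hact1 N xs γs
    rw [h0, hl] at h1
    simp only at h1
    rw [habs, min_eq_left (by linarith : s ≤ s + t)] at h1
    exact h1
end

section
/- Let (Y,d) be a metric space with an action of a finitely generated group Γ with finite symmetric generating set S containing the identity. For y,y' ∈ Y and n ∈ N, let δ_n(y,y') be the minimum over sequences y₀ = y, y₁, …, y_{2n+1} = y' with y_{2i} = s·y_{2i−1} for some s ∈ S (for 1 ≤ i ≤ n) of ∑_{i=0}^{n} d(y_{2i}, y_{2i+1}). Then the warped metric d_s on (Y, s·d) satisfies d_s(y,y') = min over n ∈ N of (n + s·δ_n(y,y')), and consequently the function s ↦ d_s(y,y') is concave on [1,∞). -/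
open scoped BigOperators

/-- `δ_n(y,y')`: the minimal cost `∑_{i=0}^n d(y_{2i}, y_{2i+1})` over sequences
`y₀ = y, …, y_{2n+1} = y'` with `y_{2i} = s·y_{2i-1}` for some `s ∈ S`
(the sequence is encoded as `n+1` consecutive pairs `(y_{2i}, y_{2i+1})`). -/
noncomputable def deltaCost {G : Type*} [Group G] {Y : Type*} [MetricSpace Y]
    (S : Set G) (act : G → Y → Y) (n : ℕ) (y y' : Y) : ℝ :=
  sInf {c | ∃ ys : Fin (n + 1) → Y × Y,
    (ys 0).1 = y ∧ (ys (Fin.last n)).2 = y' ∧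
    (∀ i : Fin n, ∃ s ∈ S, (ys i.succ).1 = act s ((ys i.castSucc).2)) ∧
    c = ∑ i : Fin (n + 1), dist (ys i).1 (ys i).2}

section Helpers

variable {Y : Type*} [MetricSpace Y] {G : Type*} [Group G]

/-- Auxiliary predicate: `c` is an admissible cost for a `δ_n`-chain from `y` to `y'`. -/
def DC (S : Set G) (act : G → Y → Y) (n : ℕ) (y y' : Y) (c : ℝ) : Prop :=
  ∃ ys : Fin (n + 1) → Y × Y,
    (ys 0).1 = y ∧ (ys (Fin.last n)).2 = y' ∧
    (∀ i : Fin n, ∃ s ∈ S, (ys i.succ).1 = act s ((ys i.castSucc).2)) ∧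
    c = ∑ i : Fin (n + 1), dist (ys i).1 (ys i).2

lemma deltaCost_eq_sInf_DC (S : Set G) (act : G → Y → Y) (n : ℕ) (y y' : Y) :
    deltaCost S act n y y' = sInf {c | DC S act n y y' c} := rfl

lemma DC.nonneg {S : Set G} {act : G → Y → Y} {n : ℕ} {y y' : Y} {c : ℝ}
    (h : DC S act n y y' c) : 0 ≤ c := by
  obtain ⟨ys, -, -, -, rfl⟩ := h
  exact Finset.sum_nonneg fun i _ => dist_nonneg

lemma DC.zero (S : Set G) (act : G → Y → Y) (y : Y) : DC S act 0 y y 0 := by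
  refine ⟨fun _ => (y, y), rfl, rfl, fun i => i.elim0, ?_⟩
  simp

lemma DC.exists (S : Set G) (act : G → Y → Y) (hS1 : (1 : G) ∈ S)
    (hact1 : ∀ y, act 1 y = y) (n : ℕ) (y y' : Y) : ∃ c, DC S act n y y' c := by
  refine ⟨_, fun i => if i = 0 then (y, y') else (y', y'), by simp, ?_, ?_, rfl⟩
  · by_cases h : (Fin.last n : Fin (n + 1)) = 0 <;> simp [h]
  · intro i
    refine ⟨1, hS1, ?_⟩
    have h1 : (i.succ : Fin (n + 1)) ≠ 0 := Fin.succ_ne_zero i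
    by_cases h2 : (i.castSucc : Fin (n + 1)) = 0 <;> simp [h1, h2, hact1]

lemma DC.snoc {S : Set G} {act : G → Y → Y} {n : ℕ} {y z : Y} {c : ℝ} {s : G}
    (hs : s ∈ S) (h : DC S act n y z c) : DC S act (n + 1) y (act s z) c := by
  obtain ⟨ys, h0, hl, hj, hc⟩ := h
  refine ⟨Fin.snoc ys (act s z, act s z), ?_, ?_, ?_, ?_⟩
  · rw [show (0 : Fin (n + 1 + 1)) = Fin.castSucc 0 by simp, Fin.snoc_castSucc]
    exact h0
  · rw [Fin.snoc_last]
  · intro i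
    refine Fin.lastCases ?_ (fun j => ?_) i
    · refine ⟨s, hs, ?_⟩
      rw [Fin.succ_last, Fin.snoc_last, Fin.snoc_castSucc, hl]
    · obtain ⟨t, ht, hjt⟩ := hj j
      refine ⟨t, ht, ?_⟩
      rw [Fin.succ_castSucc, Fin.snoc_castSucc, Fin.snoc_castSucc]
      exact hjt
  · rw [Fin.sum_univ_castSucc]
    simp [Fin.snoc_castSucc, Fin.snoc_last, hc]

lemma DC.extendList {S : Set G} {act : G → Y → Y}
    (hact1 : ∀ y, act 1 y = y)
    (hactmul : ∀ g h y, act (g * h) y = act g (act h y))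
    {n : ℕ} {y z : Y} {c : ℝ} (h : DC S act n y z c) :
    ∀ l : List G, (∀ a ∈ l, a ∈ S) → DC S act (n + l.length) y (act l.prod z) c := by
  intro l
  induction l with
  | nil => intro _; simpa [hact1] using h
  | cons a t ih =>
      intro hmem
      have ht := ih fun b hb => hmem b (List.mem_cons_of_mem a hb)
      have ha : a ∈ S := hmem a List.mem_cons_self
      have := DC.snoc ha ht
      rw [List.prod_cons, hactmul]
      exact this

lemma DC.setLast {S : Set G} {act : G → Y → Y} {n : ℕ} {y z : Y} {c : ℝ}
    (h : DC S act n y z c) (y' : Y) :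
    ∃ c', c' ≤ c + dist z y' ∧ DC S act n y y' c' := by
  obtain ⟨ys, h0, hl, hj, hc⟩ := h
  set ys' : Fin (n + 1) → Y × Y :=
    fun i => if i = Fin.last n then ((ys i).1, y') else ys i with hys'
  refine ⟨∑ i : Fin (n + 1), dist (ys' i).1 (ys' i).2, ?_, ys', ?_, ?_, ?_, rfl⟩
  · rw [hc, Fin.sum_univ_castSucc (f := fun i => dist (ys' i).1 (ys' i).2),
      Fin.sum_univ_castSucc (f := fun i => dist (ys i).1 (ys i).2)]
    have hne : ∀ i : Fin n, (i.castSucc : Fin (n + 1)) ≠ Fin.last n :=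
      fun i => (Fin.castSucc_lt_last i).ne
    have heq : ∀ i : Fin n, ys' i.castSucc = ys i.castSucc := by
      intro i; simp [hys', hne i]
    have hlast : ys' (Fin.last n) = ((ys (Fin.last n)).1, y') := by simp [hys']
    have htri : dist (ys' (Fin.last n)).1 (ys' (Fin.last n)).2
        ≤ dist (ys (Fin.last n)).1 (ys (Fin.last n)).2 + dist z y' := by
      rw [hlast]
      calc dist (ys (Fin.last n)).1 y'
          ≤ dist (ys (Fin.last n)).1 (ys (Fin.last n)).2
            + dist (ys (Fin.last n)).2 y' := dist_triangle _ _ _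
        _ = dist (ys (Fin.last n)).1 (ys (Fin.last n)).2 + dist z y' := by rw [hl]
    have hsum : ∑ i : Fin n, dist (ys' i.castSucc).1 (ys' i.castSucc).2
        = ∑ i : Fin n, dist (ys i.castSucc).1 (ys i.castSucc).2 := by
      refine Finset.sum_congr rfl fun i _ => by rw [heq i]
    rw [hsum]; linarith
  · have : (ys' 0).1 = (ys 0).1 := by
      by_cases h' : (0 : Fin (n + 1)) = Fin.last n <;> simp [hys', h']
    rw [this]; exact h0
  · simp [hys']
  · intro i
    obtain ⟨t, ht, hjt⟩ := hj i
    refine ⟨t, ht, ?_⟩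
    have h1 : (ys' i.succ).1 = (ys i.succ).1 := by
      by_cases h' : (i.succ : Fin (n + 1)) = Fin.last n <;> simp [hys', h']
    have h2 : ys' i.castSucc = ys i.castSucc := by
      simp [hys', (Fin.castSucc_lt_last i).ne]
    rw [h1, h2]; exact hjt

lemma wordLength_one_eq_zero (S : Set G) : wordLength S (1 : G) = 0 := by
  apply Nat.sInf_eq_zero.mpr
  left
  exact ⟨Fin.elim0, fun i => i.elim0, by simp⟩

lemma wordLength_le_one {S : Set G} {s : G} (hs : s ∈ S) : wordLength S s ≤ 1 :=
  Nat.sInf_le ⟨fun _ => s, fun _ => Or.inl hs, by simp⟩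

lemma exists_rep (S : Set G) (hSsymm : ∀ s ∈ S, s⁻¹ ∈ S)
    (hSgen : Subgroup.closure S = ⊤) (g : G) :
    ∃ l : List G, (∀ a ∈ l, a ∈ S) ∧ l.prod = g ∧ l.length = wordLength S g := by
  have hS' : S ∪ S⁻¹ = S := by
    apply Set.union_eq_self_of_subset_right
    intro x hx
    have : x⁻¹ ∈ S := hx
    simpa using hSsymm _ this
  have hg : g ∈ Submonoid.closure S := by
    have h1 : g ∈ (Subgroup.closure S).toSubmonoid := by
      rw [hSgen]; trivial
    rwa [Subgroup.closure_toSubmonoid, hS'] at h1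
  obtain ⟨l0, hl0, hprod⟩ := Submonoid.exists_list_of_mem_closure hg
  have hne : {n : ℕ | ∃ f : Fin n → G,
      (∀ i, f i ∈ S ∨ (f i)⁻¹ ∈ S) ∧ (List.ofFn f).prod = g}.Nonempty := by
    refine ⟨l0.length, l0.get, fun i => Or.inl (hl0 _ (l0.get_mem _)), ?_⟩
    rw [List.ofFn_get]; exact hprod
  obtain ⟨f, hf, hfp⟩ := Nat.sInf_mem hne
  refine ⟨List.ofFn f, ?_, hfp, List.length_ofFn⟩
  intro a ha
  obtain ⟨i, rfl⟩ := List.mem_ofFn.mp ha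
  rcases hf i with h | h
  · exact h
  · simpa using hSsymm _ h

lemma main_ge (S : Set G) (act : G → Y → Y) (hSsymm : ∀ s ∈ S, s⁻¹ ∈ S)
    (hSgen : Subgroup.closure S = ⊤) (hact1 : ∀ y, act 1 y = y)
    (hactmul : ∀ g h y, act (g * h) y = act g (act h y)) :
    ∀ (N : ℕ) (xs : Fin (N + 1) → Y) (γs : Fin N → G),
      ∃ n c, DC S act n (xs 0) (xs (Fin.last N)) c ∧
        (n : ℝ) ≤ ∑ i : Fin N, (wordLength S (γs i) : ℝ) ∧
        c ≤ ∑ i : Fin N, dist (act (γs i) (xs i.castSucc)) (xs i.succ) := by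
  intro N
  induction N with
  | zero =>
      intro xs γs
      exact ⟨0, 0, DC.zero S act (xs 0), by simp, by simp⟩
  | succ N ih =>
      intro xs γs
      obtain ⟨n, c, hDC, hn, hc⟩ := ih (fun i => xs i.castSucc) (fun i => γs i.castSucc)
      obtain ⟨l, hlS, hlprod, hllen⟩ := exists_rep S hSsymm hSgen (γs (Fin.last N))
      have h1 : DC S act (n + l.length) (xs (Fin.castSucc 0))
          (act (γs (Fin.last N)) (xs (Fin.last N).castSucc)) c := by
        have := DC.extendList hact1 hactmul hDC l hlS
        rwa [hlprod] at this
      obtain ⟨c', hc', hDC'⟩ := h1.setLast (xs (Fin.last (N + 1)))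
      refine ⟨n + l.length, c', ?_, ?_, ?_⟩
      · rwa [Fin.castSucc_zero] at hDC'
      · rw [Fin.sum_univ_castSucc (f := fun i => (wordLength S (γs i) : ℝ))]
        push_cast
        rw [hllen]
        push_cast
        linarith
      · rw [Fin.sum_univ_castSucc
            (f := fun i => dist (act (γs i) (xs i.castSucc)) (xs i.succ))]
        rw [Fin.succ_last]
        simp only [Fin.succ_castSucc]
        linarith

lemma chainSums_bddBelow_s5 (S : Set G) (act : G → Y → Y) {s : ℝ} (hs : 0 ≤ s) (y y' : Y) :
    BddBelow (chainSums S act (fun a b => s * dist a b) y y') := by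
  refine ⟨0, ?_⟩
  rintro a ⟨N, xs, γs, -, -, rfl⟩
  apply Finset.sum_nonneg
  intro i _
  have : (0 : ℝ) ≤ s * dist (act (γs i) (xs i.castSucc)) (xs i.succ) :=
    mul_nonneg hs dist_nonneg
  positivity

lemma chainSums_nonempty (S : Set G) (act : G → Y → Y) (d : Y → Y → ℝ) (y y' : Y) :
    (chainSums S act d y y').Nonempty := by
  refine ⟨_, 1, fun i => if i = 0 then y else y', fun _ => 1, by simp, ?_, rfl⟩
  have h : (Fin.last 1 : Fin 2) ≠ 0 := by decide
  show (if (Fin.last 1 : Fin 2) = 0 then y else y') = y'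
  rw [if_neg h]

lemma warp_le_delta (S : Set G) (act : G → Y → Y) (hS1 : (1 : G) ∈ S)
    (hact1 : ∀ y, act 1 y = y) {s : ℝ} (hs : 1 ≤ s) {n : ℕ} {y y' : Y} {c : ℝ}
    (h : DC S act n y y' c) :
    sInf (chainSums S act (fun a b => s * dist a b) y y') ≤ (n : ℝ) + s * c := by
  obtain ⟨ys, h0, hl, hj, hc⟩ := h
  choose σ hσS hσ using hj
  set xs : Fin (n + 2) → Y := Fin.cons y (fun j : Fin (n + 1) => (ys j).2) with hxs
  set γs : Fin (n + 1) → G := Fin.cons 1 σ with hγs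
  set V : ℝ := ∑ i : Fin (n + 1),
      ((wordLength S (γs i) : ℝ) + s * dist (act (γs i) (xs i.castSucc)) (xs i.succ)) with hV
  have hmem : V ∈ chainSums S act (fun a b => s * dist a b) y y' := by
    refine ⟨n + 1, xs, γs, by simp [hxs], ?_, rfl⟩
    rw [show (Fin.last (n + 1) : Fin (n + 2)) = (Fin.last n).succ from (Fin.succ_last n).symm,
      hxs, Fin.cons_succ]
    exact hl
  have hle : V ≤ (n : ℝ) + s * c := by
    rw [hV, hc, Fin.sum_univ_succ, Fin.sum_univ_succ (f := fun i => dist (ys i).1 (ys i).2)]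
    have e0 : (wordLength S (γs 0) : ℝ)
        + s * dist (act (γs 0) (xs (Fin.castSucc 0))) (xs (Fin.succ 0))
        = s * dist (ys 0).1 (ys 0).2 := by
      rw [hγs, hxs]
      simp only [Fin.cons_zero, Fin.castSucc_zero, wordLength_one_eq_zero, Fin.cons_succ,
        hact1, Nat.cast_zero, zero_add, h0]
    have e1 : ∀ j : Fin n, (wordLength S (γs j.succ) : ℝ)
        + s * dist (act (γs j.succ) (xs j.succ.castSucc)) (xs j.succ.succ)
        ≤ 1 + s * dist (ys j.succ).1 (ys j.succ).2 := by
      intro j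
      have hx1 : xs j.succ.castSucc = (ys j.castSucc).2 := by
        rw [hxs, ← Fin.succ_castSucc, Fin.cons_succ]
      have hx2 : xs j.succ.succ = (ys j.succ).2 := by
        rw [hxs, Fin.cons_succ]
      have hγ : γs j.succ = σ j := by rw [hγs, Fin.cons_succ]
      rw [hx1, hx2, hγ, ← hσ j]
      have : (wordLength S (σ j) : ℝ) ≤ 1 := by
        exact_mod_cast wordLength_le_one (hσS j)
      linarith
    rw [e0, mul_add]
    have hmono : ∑ j : Fin n, ((wordLength S (γs j.succ) : ℝ)
        + s * dist (act (γs j.succ) (xs j.succ.castSucc)) (xs j.succ.succ))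
        ≤ ∑ j : Fin n, (1 + s * dist (ys j.succ).1 (ys j.succ).2) :=
      Finset.sum_le_sum fun j _ => e1 j
    have hR : ∑ j : Fin n, (1 + s * dist (ys j.succ).1 (ys j.succ).2)
        = (n : ℝ) + s * ∑ j : Fin n, dist (ys j.succ).1 (ys j.succ).2 := by
      rw [Finset.sum_add_distrib, ← Finset.mul_sum]
      simp
    linarith [hmono, hR]
  exact le_trans (csInf_le (chainSums_bddBelow_s5 S act (by linarith) y y') hmem) hle

lemma delta_nonneg (S : Set G) (act : G → Y → Y) (n : ℕ) (y y' : Y) :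
    0 ≤ deltaCost S act n y y' := by
  rw [deltaCost_eq_sInf_DC]
  exact Real.sInf_nonneg fun c hc => hc.nonneg

lemma delta_le {S : Set G} {act : G → Y → Y} {n : ℕ} {y y' : Y} {c : ℝ}
    (h : DC S act n y y' c) : deltaCost S act n y y' ≤ c := by
  rw [deltaCost_eq_sInf_DC]
  exact csInf_le ⟨0, fun c' hc' => hc'.nonneg⟩ h

end Helpers

/-- `d_s(y,y') = min_n (n + s·δ_n(y,y'))` and `s ↦ d_s(y,y')`
is concave on `[1,∞)`. -/
theorem warped_metric_delta_formula_and_concavity {Y : Type*} [MetricSpace Y] [ProperSpace Y]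
    {G : Type*} [Group G] (S : Set G) (hSfin : S.Finite) (hSsymm : ∀ s ∈ S, s⁻¹ ∈ S)
    (hS1 : (1 : G) ∈ S) (hSgen : Subgroup.closure S = ⊤)
    (act : G → Y → Y)
    (hact1 : ∀ y, act 1 y = y) (hactmul : ∀ g h y, act (g * h) y = act g (act h y))
    (hcont : ∀ g, Continuous (act g)) :
    ∀ y y' : Y,
      (∀ s : ℝ, 1 ≤ s →
        warpDist S act (fun a b => s * dist a b) y y'
          = sInf {c : ℝ | ∃ n : ℕ, c = (n : ℝ) + s * deltaCost S act n y y'}) ∧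
      ConcaveOn ℝ (Set.Ici (1 : ℝ))
        (fun s => warpDist S act (fun a b => s * dist a b) y y') := by
  intro y y'
  have hBne : ∀ s : ℝ,
      {c : ℝ | ∃ n : ℕ, c = (n : ℝ) + s * deltaCost S act n y y'}.Nonempty :=
    fun s => ⟨_, 0, rfl⟩
  have hBbdd : ∀ s : ℝ, 1 ≤ s →
      BddBelow {c : ℝ | ∃ n : ℕ, c = (n : ℝ) + s * deltaCost S act n y y'} := by
    intro s hs
    refine ⟨0, ?_⟩
    rintro c ⟨n, rfl⟩
    have h1 := delta_nonneg S act n y y'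
    have h2 : (0 : ℝ) ≤ s * deltaCost S act n y y' := mul_nonneg (by linarith) h1
    positivity
  have key : ∀ s : ℝ, 1 ≤ s →
      warpDist S act (fun a b => s * dist a b) y y'
        = sInf {c : ℝ | ∃ n : ℕ, c = (n : ℝ) + s * deltaCost S act n y y'} := by
    intro s hs
    have hspos : (0 : ℝ) < s := by linarith
    have hAne := chainSums_nonempty S act (fun a b => s * dist a b) y y'
    have hAbdd := chainSums_bddBelow_s5 S act (le_of_lt hspos) y y'
    apply le_antisymm
    · -- warpDist ≤ sInf B
      apply le_csInf (hBne s)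
      rintro b ⟨n, rfl⟩
      have hDCne : {c : ℝ | DC S act n y y' c}.Nonempty :=
        DC.exists S act hS1 hact1 n y y'
      have hlow : ∀ c ∈ {c : ℝ | DC S act n y y' c},
          (warpDist S act (fun a b => s * dist a b) y y' - n) / s ≤ c := by
        intro c hc
        rw [div_le_iff₀ hspos]
        have h3 : warpDist S act (fun a b => s * dist a b) y y' ≤ (n : ℝ) + s * c :=
          warp_le_delta S act hS1 hact1 hs hc
        nlinarith
      have h2 : (warpDist S act (fun a b => s * dist a b) y y' - n) / s
          ≤ sInf {c : ℝ | DC S act n y y' c} := le_csInf hDCne hlow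
      rw [div_le_iff₀ hspos] at h2
      rw [← deltaCost_eq_sInf_DC] at h2
      nlinarith
    · -- sInf B ≤ warpDist
      apply le_csInf hAne
      rintro a ⟨N, xs, γs, h0, hl, rfl⟩
      obtain ⟨n, c, hDC, hn, hc⟩ := main_ge S act hSsymm hSgen hact1 hactmul N xs γs
      rw [h0, hl] at hDC
      have hstep1 : sInf {c : ℝ | ∃ n : ℕ, c = (n : ℝ) + s * deltaCost S act n y y'}
          ≤ (n : ℝ) + s * deltaCost S act n y y' :=
        csInf_le (hBbdd s hs) ⟨n, rfl⟩
      have hstep2 : deltaCost S act n y y' ≤ c := delta_le hDC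
      have hsplit : ∑ i : Fin N, ((wordLength S (γs i) : ℝ)
            + s * dist (act (γs i) (xs i.castSucc)) (xs i.succ))
          = (∑ i : Fin N, (wordLength S (γs i) : ℝ))
            + s * ∑ i : Fin N, dist (act (γs i) (xs i.castSucc)) (xs i.succ) := by
        rw [Finset.sum_add_distrib, Finset.mul_sum]
      rw [hsplit]
      nlinarith
  refine ⟨key, ?_⟩
  refine ⟨convex_Ici 1, ?_⟩
  intro p hp q hq a b ha hb hab
  simp only [smul_eq_mul]
  rw [Set.mem_Ici] at hp hq
  have hs0 : 1 ≤ a * p + b * q := by nlinarith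
  rw [key p hp, key q hq, key _ hs0]
  apply le_csInf (hBne _)
  rintro c ⟨n, rfl⟩
  have h1 : sInf {c : ℝ | ∃ m : ℕ, c = (m : ℝ) + p * deltaCost S act m y y'}
      ≤ (n : ℝ) + p * deltaCost S act n y y' := csInf_le (hBbdd p hp) ⟨n, rfl⟩
  have h2 : sInf {c : ℝ | ∃ m : ℕ, c = (m : ℝ) + q * deltaCost S act m y y'}
      ≤ (n : ℝ) + q * deltaCost S act n y y' := csInf_le (hBbdd q hq) ⟨n, rfl⟩
  have e : a * ((n : ℝ) + p * deltaCost S act n y y')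
      + b * ((n : ℝ) + q * deltaCost S act n y y')
      = (n : ℝ) + (a * p + b * q) * deltaCost S act n y y' := by
    have : a * ((n : ℝ) + p * deltaCost S act n y y')
        + b * ((n : ℝ) + q * deltaCost S act n y y')
        = (a + b) * (n : ℝ) + (a * p + b * q) * deltaCost S act n y y' := by ring
    rw [this, hab, one_mul]
  calc a * sInf {c : ℝ | ∃ m : ℕ, c = (m : ℝ) + p * deltaCost S act m y y'}
      + b * sInf {c : ℝ | ∃ m : ℕ, c = (m : ℝ) + q * deltaCost S act m y y'}
      ≤ a * ((n : ℝ) + p * deltaCost S act n y y')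
        + b * ((n : ℝ) + q * deltaCost S act n y y') :=
        add_le_add (mul_le_mul_of_nonneg_left h1 ha) (mul_le_mul_of_nonneg_left h2 hb)
    _ = (n : ℝ) + (a * p + b * q) * deltaCost S act n y y' := e
end

section
/- Let Γ act on a proper metric space (Y,d), let y, y' lie in the same Γ-orbit, and let N be the minimal word length of γ ∈ Γ with y' = γy. Define δ_n(y,y') as the minimal total metric cost of connecting y to y' with at most n applications of generators (as in the warped metric formula). If δ_n(y,y') > 0 for all n < N, then for all s ≥ max_{n<N} (N−n)/δ_n(y,y'), the warped metric on (Y, s·d) satisfies d_s(y,y') = N. -/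
open scoped BigOperators

section Aux

variable {G : Type*} [Group G] {Y : Type*} [MetricSpace Y]
variable (S : Set G) (act : G → Y → Y)

/-- The set whose infimum defines `deltaCost`. -/
def Dset (n : ℕ) (y y' : Y) : Set ℝ :=
  {c | ∃ ys : Fin (n + 1) → Y × Y,
    (ys 0).1 = y ∧ (ys (Fin.last n)).2 = y' ∧
    (∀ i : Fin n, ∃ s ∈ S, (ys i.succ).1 = act s ((ys i.castSucc).2)) ∧
    c = ∑ i : Fin (n + 1), dist (ys i).1 (ys i).2}

lemma deltaCost_eq (n : ℕ) (y y' : Y) :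
    deltaCost S act n y y' = sInf (Dset S act n y y') := rfl

lemma Dset_nonneg {n : ℕ} {y y' : Y} {c : ℝ} (hc : c ∈ Dset S act n y y') : 0 ≤ c := by
  obtain ⟨ys, -, -, -, rfl⟩ := hc
  exact Finset.sum_nonneg fun i _ => dist_nonneg

lemma Dset_bddBelow (n : ℕ) (y y' : Y) : BddBelow (Dset S act n y y') :=
  ⟨0, fun c hc => Dset_nonneg S act hc⟩

lemma Dset_mem_dist (h1 : (1 : G) ∈ S) (hact1 : ∀ z : Y, act 1 z = z) (n : ℕ) (y y' : Y) :
    dist y y' ∈ Dset S act n y y' := by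
  refine ⟨fun i => (y, if i = Fin.last n then y' else y), rfl, by simp, ?_, ?_⟩
  · intro i
    refine ⟨1, h1, ?_⟩
    show y = act 1 (if i.castSucc = Fin.last n then y' else y)
    rw [if_neg (Fin.ne_of_lt (Fin.castSucc_lt_last i)), hact1]
  · rw [Fin.sum_univ_castSucc]
    simp [Fin.ne_of_lt (Fin.castSucc_lt_last _)]

lemma Dset_nonempty (h1 : (1 : G) ∈ S) (hact1 : ∀ z : Y, act 1 z = z) (n : ℕ) (y y' : Y) :
    (Dset S act n y y').Nonempty :=
  ⟨dist y y', Dset_mem_dist S act h1 hact1 n y y'⟩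

/-- one generator step: append a cost-free pair. -/
lemma Dset_step {n : ℕ} {y z : Y} {c : ℝ} {s : G} (hs : s ∈ S)
    (hc : c ∈ Dset S act n y z) : c ∈ Dset S act (n + 1) y (act s z) := by
  obtain ⟨ys, h0, hlast, hrel, rfl⟩ := hc
  refine ⟨Fin.snoc ys (act s z, act s z), ?_, by simp, ?_, ?_⟩
  · rw [show (0 : Fin (n + 1 + 1)) = Fin.castSucc 0 by rfl, Fin.snoc_castSucc]
    exact h0
  · intro i
    refine Fin.lastCases ?_ ?_ i
    · refine ⟨s, hs, ?_⟩
      rw [Fin.succ_last, Fin.snoc_last, Fin.snoc_castSucc, hlast]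
    · intro j
      obtain ⟨t, ht, hrelj⟩ := hrel j
      refine ⟨t, ht, ?_⟩
      simp only [Fin.succ_castSucc, Fin.snoc_castSucc]
      exact hrelj
  · symm
    rw [Fin.sum_univ_castSucc]
    simp

/-- apply a word letter by letter. -/
lemma Dset_word (hactmul : ∀ g h (z : Y), act (g * h) z = act g (act h z))
    (hact1 : ∀ z : Y, act 1 z = z)
    {n : ℕ} {y z : Y} {c : ℝ} (l : List G) (hl : ∀ a ∈ l, a ∈ S)
    (hc : c ∈ Dset S act n y z) : c ∈ Dset S act (n + l.length) y (act l.prod z) := by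
  induction l with
  | nil => simpa [hact1] using hc
  | cons a t ih =>
      have ht : c ∈ Dset S act (n + t.length) y (act t.prod z) :=
        ih fun b hb => hl b (List.mem_cons_of_mem a hb)
      have := Dset_step S act (hl a List.mem_cons_self) ht
      rw [List.prod_cons, hactmul]
      exact this

/-- change the final endpoint, paying the distance. -/
lemma deltaCost_le_endpoint {n : ℕ} {y z : Y} {c : ℝ} (x' : Y)
    (hc : c ∈ Dset S act n y z) :
    deltaCost S act n y x' ≤ c + dist z x' := by
  obtain ⟨ys, h0, hlast, hrel, rfl⟩ := hc
  set ys' : Fin (n + 1) → Y × Y :=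
    fun i => ((ys i).1, if i = Fin.last n then x' else (ys i).2) with hys'
  have hmem : (∑ i : Fin (n + 1), dist (ys' i).1 (ys' i).2) ∈ Dset S act n y x' := by
    refine ⟨ys', h0, by simp [hys'], ?_, rfl⟩
    intro i
    obtain ⟨t, ht, hrelj⟩ := hrel i
    exact ⟨t, ht, by
      simp only [hys', if_neg (Fin.ne_of_lt (Fin.castSucc_lt_last i))]
      exact hrelj⟩
  have hle : (∑ i : Fin (n + 1), dist (ys' i).1 (ys' i).2) ≤
      (∑ i : Fin (n + 1), dist (ys i).1 (ys i).2) + dist z x' := by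
    rw [Fin.sum_univ_castSucc, Fin.sum_univ_castSucc (f := fun i => dist (ys i).1 (ys i).2)]
    have h1 : ∀ j : Fin n, dist (ys' j.castSucc).1 (ys' j.castSucc).2 =
        dist (ys j.castSucc).1 (ys j.castSucc).2 := by
      intro j; simp [hys', if_neg (Fin.ne_of_lt (Fin.castSucc_lt_last j))]
    rw [Finset.sum_congr rfl fun j _ => h1 j]
    have h2 : dist (ys' (Fin.last n)).1 (ys' (Fin.last n)).2 =
        dist (ys (Fin.last n)).1 x' := by simp [hys']
    have h3 : dist (ys (Fin.last n)).1 x' ≤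
        dist (ys (Fin.last n)).1 (ys (Fin.last n)).2 + dist z x' := by
      rw [hlast]; exact dist_triangle _ _ _
    rw [h2]
    linarith
  exact le_trans (csInf_le (Dset_bddBelow S act n y x') hmem) hle

/-- realize `wordLength` by a list of generators (using symmetry of `S`). -/
lemma wordLength_spec (hSsymm : ∀ s ∈ S, s⁻¹ ∈ S) (hSgen : Subgroup.closure S = ⊤) (γ : G) :
    ∃ f : Fin (wordLength S γ) → G, (∀ i, f i ∈ S) ∧ (List.ofFn f).prod = γ := by
  have hne : {n : ℕ | ∃ f : Fin n → G, (∀ i, f i ∈ S ∨ (f i)⁻¹ ∈ S) ∧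
      (List.ofFn f).prod = γ}.Nonempty := by
    have hγ : γ ∈ Submonoid.closure (S ∪ S⁻¹) := by
      rw [← Subgroup.closure_toSubmonoid]
      show γ ∈ Subgroup.closure S
      rw [hSgen]; trivial
    obtain ⟨l, hl, hprod⟩ := Submonoid.exists_list_of_mem_closure hγ
    refine ⟨l.length, l.get, ?_, by rw [List.ofFn_get]; exact hprod⟩
    intro i
    rcases (Set.mem_union _ _ _).mp (hl (l.get i) (l.get_mem i)) with h | h
    · exact Or.inl h
    · exact Or.inr (Set.mem_inv.mp h)
  obtain ⟨f, hf, hprod⟩ := Nat.sInf_mem hne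
  refine ⟨f, fun i => ?_, hprod⟩
  rcases hf i with h | h
  · exact h
  · simpa using hSsymm _ h

lemma deltaCost_extend (hSsymm : ∀ s ∈ S, s⁻¹ ∈ S) (hSgen : Subgroup.closure S = ⊤)
    (hS1 : (1 : G) ∈ S)
    (hactmul : ∀ g h (z : Y), act (g * h) z = act g (act h z))
    (hact1 : ∀ z : Y, act 1 z = z)
    (n : ℕ) (y z x' : Y) (γ : G) :
    deltaCost S act (n + wordLength S γ) y x' ≤
      deltaCost S act n y z + dist (act γ z) x' := by
  obtain ⟨f, hf, hprod⟩ := wordLength_spec S hSsymm hSgen γ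
  have key : ∀ c ∈ Dset S act n y z,
      deltaCost S act (n + wordLength S γ) y x' - dist (act γ z) x' ≤ c := by
    intro c hc
    have h1 : c ∈ Dset S act (n + (List.ofFn f).length) y (act (List.ofFn f).prod z) :=
      Dset_word S act hactmul hact1 (List.ofFn f)
        (by
          intro a ha
          obtain ⟨i, rfl⟩ := List.mem_ofFn.mp ha
          exact hf i) hc
    rw [hprod, List.length_ofFn] at h1
    have := deltaCost_le_endpoint S act x' h1
    linarith
  have := le_csInf (Dset_nonempty S act hS1 hact1 n y z) key
  rw [← deltaCost_eq] at this
  linarith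

/-- the chain lemma: a chain of `M` steps with total word length `W` and total
distance `D` witnesses `deltaCost W ≤ D`. -/
lemma deltaCost_le_chain (hSsymm : ∀ s ∈ S, s⁻¹ ∈ S) (hSgen : Subgroup.closure S = ⊤)
    (hS1 : (1 : G) ∈ S)
    (hactmul : ∀ g h (z : Y), act (g * h) z = act g (act h z))
    (hact1 : ∀ z : Y, act 1 z = z) :
    ∀ (M : ℕ) (xs : Fin (M + 1) → Y) (γs : Fin M → G),
      deltaCost S act (∑ i, wordLength S (γs i)) (xs 0) (xs (Fin.last M)) ≤
        ∑ i : Fin M, dist (act (γs i) (xs i.castSucc)) (xs i.succ) := by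
  intro M
  induction M with
  | zero =>
      intro xs γs
      simp only [Finset.univ_eq_empty, Finset.sum_empty]
      have hmem : (0 : ℝ) ∈ Dset S act 0 (xs 0) (xs (Fin.last 0)) := by
        refine ⟨fun _ => (xs 0, xs 0), rfl, ?_, fun i => i.elim0, by simp⟩
        simp [Fin.last]
      exact csInf_le (Dset_bddBelow S act _ _ _) hmem
  | succ M ih =>
      intro xs γs
      have h1 := ih (fun i => xs i.castSucc) (fun i => γs i.castSucc)
      have h2 := deltaCost_extend S act hSsymm hSgen hS1 hactmul hact1
        (∑ i : Fin M, wordLength S (γs i.castSucc))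
        (xs 0) (xs ((Fin.last M).castSucc)) (xs (Fin.last (M + 1)))
        (γs (Fin.last M))
      rw [Fin.sum_univ_castSucc (f := fun i => wordLength S (γs i))]
      rw [Fin.sum_univ_castSucc
        (f := fun i => dist (act (γs i) (xs i.castSucc)) (xs i.succ))]
      have h3 : ∀ i : Fin M,
          dist (act (γs i.castSucc) (xs (i.castSucc.castSucc))) (xs i.castSucc.succ) =
          dist (act (γs i.castSucc) (xs (Fin.castSucc (Fin.castSucc i))))
            (xs (Fin.castSucc i.succ)) := by
        intro i
        rw [Fin.succ_castSucc]
      have hcast0 : (Fin.castSucc (0 : Fin (M + 1))) = (0 : Fin (M + 2)) := rfl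
      have hlast : (Fin.last M).succ = Fin.last (M + 1) := Fin.succ_last M
      calc deltaCost S act (∑ i : Fin M, wordLength S (γs i.castSucc) +
              wordLength S (γs (Fin.last M))) (xs 0) (xs (Fin.last (M + 1)))
          ≤ deltaCost S act (∑ i : Fin M, wordLength S (γs i.castSucc))
              (xs 0) (xs ((Fin.last M).castSucc)) +
            dist (act (γs (Fin.last M)) (xs ((Fin.last M).castSucc)))
              (xs (Fin.last (M + 1))) := h2
        _ ≤ (∑ i : Fin M, dist (act (γs i.castSucc) (xs (Fin.castSucc i).castSucc))
              (xs (Fin.castSucc i).succ)) +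
            dist (act (γs (Fin.last M)) (xs ((Fin.last M).castSucc)))
              (xs (Fin.last (M + 1))) := by
            refine add_le_add ?_ (le_refl _)
            calc deltaCost S act (∑ i : Fin M, wordLength S (γs i.castSucc))
                  (xs 0) (xs ((Fin.last M).castSucc))
                ≤ ∑ i : Fin M, dist (act (γs i.castSucc)
                    ((fun j : Fin (M + 1) => xs j.castSucc) i.castSucc))
                    ((fun j : Fin (M + 1) => xs j.castSucc) i.succ) := by
                  simpa using h1
              _ = ∑ i : Fin M, dist (act (γs i.castSucc) (xs (Fin.castSucc i).castSucc))
                    (xs (Fin.castSucc i).succ) := by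
                  refine Finset.sum_congr rfl fun i _ => ?_
                  rw [Fin.succ_castSucc]
        _ = _ := by rw [hlast]

end Aux

/-- if `y' = γy` with `N` the minimal word length of such `γ`, and
`δ_n(y,y') > 0` for all `n < N`, then `d_s(y,y') = N` for all
`s ≥ max_{n<N} (N−n)/δ_n(y,y')`. -/
theorem warped_metric_stabilizes_on_orbit {Y : Type*} [MetricSpace Y] [ProperSpace Y]
    {G : Type*} [Group G] (S : Set G) (hSfin : S.Finite) (hSsymm : ∀ s ∈ S, s⁻¹ ∈ S)
    (hS1 : (1 : G) ∈ S) (hSgen : Subgroup.closure S = ⊤)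
    (act : G → Y → Y)
    (hact1 : ∀ y, act 1 y = y) (hactmul : ∀ g h y, act (g * h) y = act g (act h y))
    (hcont : ∀ g, Continuous (act g))
    (y y' : Y) (N : ℕ)
    (hreach : ∃ γ : G, act γ y = y' ∧ wordLength S γ = N)
    (hmin : ∀ γ : G, act γ y = y' → N ≤ wordLength S γ)
    (hpos : ∀ n : ℕ, n < N → 0 < deltaCost S act n y y') :
    ∀ s : ℝ, 1 ≤ s → (∀ n : ℕ, n < N → ((N : ℝ) - n) / deltaCost S act n y y' ≤ s) →
      warpDist S act (fun a b => s * dist a b) y y' = N := by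
  intro s hs1 hsmax
  have hs0 : (0 : ℝ) ≤ s := le_trans zero_le_one hs1
  obtain ⟨γ, hγy, hγN⟩ := hreach
  -- `N` is a chain sum (the one-step chain through `γ`).
  have hNmem : (N : ℝ) ∈ chainSums S act (fun a b => s * dist a b) y y' := by
    refine ⟨1, ![y, y'], ![γ], rfl, rfl, ?_⟩
    simp [hγy, hγN]
  -- chain sums are bounded below by 0
  have hbdd : BddBelow (chainSums S act (fun a b => s * dist a b) y y') := by
    refine ⟨0, fun c hc => ?_⟩
    obtain ⟨M, xs, γs, -, -, rfl⟩ := hc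
    exact Finset.sum_nonneg fun i _ =>
      add_nonneg (Nat.cast_nonneg _) (mul_nonneg hs0 dist_nonneg)
  -- lower bound: every chain sum is at least `N`.
  have hlow : ∀ c ∈ chainSums S act (fun a b => s * dist a b) y y', (N : ℝ) ≤ c := by
    rintro c ⟨M, xs, γs, h0, hl, rfl⟩
    set W : ℕ := ∑ i, wordLength S (γs i) with hW
    set D : ℝ := ∑ i : Fin M, dist (act (γs i) (xs i.castSucc)) (xs i.succ) with hD
    have hD0 : 0 ≤ D := Finset.sum_nonneg fun i _ => dist_nonneg
    have hcval : (∑ i : Fin M, ((wordLength S (γs i) : ℝ) +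
        (fun a b => s * dist a b) (act (γs i) (xs i.castSucc)) (xs i.succ))) =
        (W : ℝ) + s * D := by
      rw [Finset.sum_add_distrib, ← Finset.mul_sum, hW, Nat.cast_sum]
    rw [hcval]
    by_cases hWN : N ≤ W
    · have : (N : ℝ) ≤ W := Nat.cast_le.mpr hWN
      nlinarith [mul_nonneg hs0 hD0]
    · push_neg at hWN
      have hδ : 0 < deltaCost S act W y y' := hpos W hWN
      have hchain := deltaCost_le_chain S act hSsymm hSgen hS1 hactmul hact1 M xs γs
      rw [h0, hl, ← hW, ← hD] at hchain
      have hsW : ((N : ℝ) - W) / deltaCost S act W y y' ≤ s := hsmax W hWN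
      rw [div_le_iff₀ hδ] at hsW
      have : s * deltaCost S act W y y' ≤ s * D := mul_le_mul_of_nonneg_left hchain hs0
      linarith
  -- conclude
  refine le_antisymm (csInf_le hbdd hNmem) (le_csInf ⟨_, hNmem⟩ hlow)
end
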